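/- Let ν ≥ 1, μ ≥ 0 and β ≥ 0 be integers. Then the double integral ∫_0^1 ∫_0^1 (1−z)^{ν−1} · z · (1−zx)^{β+μ−ν} dx dz converges and equals 1 / (ν(β+μ+1)). -/

import Mathlib

open MeasureTheory Real intervalIntegral Set
open scoped Interval

lemma aux_ii_log (n : ℕ) : IntervalIntegrable (fun u : ℝ => u ^ n * Real.log u) volume 0 1 := by
  have hg : IntervalIntegrable (fun u : ℝ => 2 * u ^ (-(1:ℝ)/2)) volume 0 1 :=
    (intervalIntegrable_rpow' (by norm_num)).const_mul 2
  refine hg.mono_fun (((measurable_id.pow_const n).mul Real.measurable_log).aestronglyMeasurable) ?_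
  rw [Set.uIoc_of_le zero_le_one]
  filter_upwards [ae_restrict_mem measurableSet_Ioc] with u hu
  obtain ⟨h0, h1⟩ := hu
  have hlog : |Real.log u| ≤ 2 * u ^ (-(1:ℝ)/2) := by
    have h2 : Real.log (u ^ (-(1:ℝ)/2)) ≤ u ^ (-(1:ℝ)/2) - 1 :=
      Real.log_le_sub_one_of_pos (Real.rpow_pos_of_pos h0 _)
    rw [Real.log_rpow h0] at h2
    have : -Real.log u ≤ 2 * u ^ (-(1:ℝ)/2) - 2 := by linarith
    have hle : Real.log u ≤ 0 := Real.log_nonpos (le_of_lt h0) h1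
    rw [abs_of_nonpos hle]
    have hpos : (0:ℝ) < u ^ (-(1:ℝ)/2) := Real.rpow_pos_of_pos h0 _
    linarith
  have hun : |u ^ n| ≤ 1 := by
    rw [abs_of_nonneg (pow_nonneg h0.le n)]
    exact pow_le_one₀ h0.le h1
  calc ‖u ^ n * Real.log u‖ = |u ^ n| * |Real.log u| := abs_mul _ _
    _ ≤ 1 * (2 * u ^ (-(1:ℝ)/2)) := by
        exact mul_le_mul hun hlog (abs_nonneg _) zero_le_one
    _ = ‖2 * u ^ (-(1:ℝ)/2)‖ := by
        rw [one_mul, Real.norm_eq_abs, abs_of_nonneg (by positivity)]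

lemma aux_int_log (n : ℕ) :
    ∫ u in (0:ℝ)..1, u ^ n * Real.log u = -(1 / ((n:ℝ) + 1) ^ 2) := by
  have hF : ∀ u : ℝ, u ^ n * (u * Real.log u) / ((n:ℝ)+1) - u ^ (n+1) / ((n:ℝ)+1)^2
      = u ^ (n+1) * Real.log u / ((n:ℝ)+1) - u ^ (n+1) / ((n:ℝ)+1)^2 := by
    intro u; rw [pow_succ]; ring
  set F : ℝ → ℝ := fun u => u ^ n * (u * Real.log u) / ((n:ℝ)+1) - u ^ (n+1) / ((n:ℝ)+1)^2
    with hFdef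
  have hn1 : ((n:ℝ) + 1) ≠ 0 := by positivity
  have hcont : ContinuousOn F (Set.Icc 0 1) :=
    (((continuous_pow n).mul Real.continuous_mul_log).div_const _ |>.sub
      ((continuous_pow (n+1)).div_const _)).continuousOn
  have hderiv : ∀ u ∈ Set.Ioo (0:ℝ) 1, HasDerivAt F (u ^ n * Real.log u) u := by
    intro u hu
    have hu0 : u ≠ 0 := ne_of_gt hu.1
    have h1 : HasDerivAt (fun u : ℝ => u ^ (n+1) * Real.log u)
        (((n:ℝ)+1) * u ^ n * Real.log u + u ^ n) u := by
      have := (hasDerivAt_pow (n+1) u).mul (Real.hasDerivAt_log hu0)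
      refine this.congr_deriv ?_
      push_cast
      field_simp
      ring
    have h2 : HasDerivAt (fun u : ℝ => u ^ (n+1) * Real.log u / ((n:ℝ)+1) - u ^ (n+1) / ((n:ℝ)+1)^2)
        ((((n:ℝ)+1) * u ^ n * Real.log u + u ^ n) / ((n:ℝ)+1)
          - ((n:ℝ)+1) * u ^ n / ((n:ℝ)+1)^2) u := by
      refine HasDerivAt.sub (h1.div_const _) ?_
      have := (hasDerivAt_pow (n+1) u).div_const (((n:ℝ)+1)^2)
      refine this.congr_deriv ?_
      push_cast; ring
    have heq : F = fun u : ℝ => u ^ (n+1) * Real.log u / ((n:ℝ)+1) - u ^ (n+1) / ((n:ℝ)+1)^2 :=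
      funext hF
    rw [heq]
    convert h2 using 1
    field_simp
    ring
  have := intervalIntegral.integral_eq_sub_of_hasDerivAt_of_le zero_le_one hcont hderiv
    (aux_ii_log n)
  rw [this]
  simp [hFdef, Real.log_one]


lemma zpow17_inner_integrable (e : ℤ) {z : ℝ} (hz : z ∈ Set.Ioo (0:ℝ) 1) :
    IntegrableOn (fun x : ℝ => (1 - z * x) ^ e) (Set.Ioo 0 1) := by
  obtain ⟨hz0, hz1⟩ := hz
  have hcont : ContinuousOn (fun x : ℝ => (1 - z * x) ^ e) (Set.Icc 0 1) := by
    apply ContinuousOn.zpow₀ (by fun_prop)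
    intro x hx
    left
    have : z * x ≤ z := by nlinarith [hx.1, hx.2]
    nlinarith
  exact hcont.integrableOn_Icc.mono_set Set.Ioo_subset_Icc_self

lemma zpow17_inner_eq (e : ℤ) {z : ℝ} (hz : z ∈ Set.Ioo (0:ℝ) 1) :
    ∫ x in Set.Ioo (0:ℝ) 1, (1 - z * x) ^ e
      = z⁻¹ * ∫ t in (1 - z)..1, (t:ℝ) ^ e := by
  obtain ⟨hz0, hz1⟩ := hz
  rw [← integral_Ioc_eq_integral_Ioo, ← intervalIntegral.integral_of_le zero_le_one]
  have h1 := intervalIntegral.integral_comp_mul_left (a := 0) (b := 1)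
    (fun u : ℝ => (1 - u) ^ e) (ne_of_gt hz0)
  simp only [mul_zero, mul_one, smul_eq_mul] at h1
  rw [h1]
  congr 1
  have h2 := intervalIntegral.integral_comp_sub_left (a := 0) (b := z)
    (fun t : ℝ => t ^ e) 1
  simpa using h2

lemma zpow17_pow_int (m : ℕ) : ∫ z in (0:ℝ)..1, (1 - z) ^ m = 1 / ((m:ℝ) + 1) := by
  have h := intervalIntegral.integral_comp_sub_left (a := 0) (b := 1)
    (fun t : ℝ => t ^ m) 1
  simp only [sub_self, sub_zero] at h
  rw [show (fun z : ℝ => (1 - z) ^ m) = fun z : ℝ => (fun t : ℝ => t ^ m) (1 - z) from rfl] at *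
  rw [h, integral_pow]
  norm_num

lemma zpow17_main (n k : ℕ) (e : ℤ) (H : ℝ → ℝ)
    (hHint : IntegrableOn H (Set.Ioo 0 1))
    (hHeq : ∀ z ∈ Set.Ioo (0:ℝ) 1,
      (1 - z) ^ n * ∫ t in (1 - z)..1, (t:ℝ) ^ e = H z)
    (hHval : ∫ z in Set.Ioo (0:ℝ) 1, H z = 1 / (((n:ℝ) + 1) * ((k:ℝ) + 1))) :
    IntegrableOn (fun p : ℝ × ℝ => (1 - p.1) ^ n * p.1 * (1 - p.1 * p.2) ^ e)
      (Set.Ioo 0 1 ×ˢ Set.Ioo 0 1) ∧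
    ∫ p in Set.Ioo (0:ℝ) 1 ×ˢ Set.Ioo (0:ℝ) 1,
        (1 - p.1) ^ n * p.1 * (1 - p.1 * p.2) ^ e
      = 1 / (((n:ℝ) + 1) * ((k:ℝ) + 1)) := by
  set f : ℝ × ℝ → ℝ := fun p => (1 - p.1) ^ n * p.1 * (1 - p.1 * p.2) ^ e with hf
  have hfm : Measurable f := by fun_prop
  set μr : Measure ℝ := volume.restrict (Set.Ioo 0 1) with hμr
  have hprod : (volume : Measure (ℝ × ℝ)).restrict (Set.Ioo 0 1 ×ˢ Set.Ioo 0 1)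
      = μr.prod μr := by
    rw [hμr, Measure.prod_restrict, ← Measure.volume_eq_prod]
  -- pointwise facts
  have hpt : ∀ z ∈ Set.Ioo (0:ℝ) 1,
      Integrable (fun x => f (z, x)) μr := by
    intro z hz
    have : (fun x => f (z, x)) = fun x => ((1 - z) ^ n * z) * (1 - z * x) ^ e := by
      funext x; simp [hf, mul_assoc]
    rw [this]
    exact (zpow17_inner_integrable e hz).const_mul _
  have hnorm : ∀ z ∈ Set.Ioo (0:ℝ) 1,
      (∫ x, ‖f (z, x)‖ ∂μr) = H z := by
    intro z hz
    obtain ⟨hz0, hz1⟩ := hz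
    have h1 : (∫ x, ‖f (z, x)‖ ∂μr) = ∫ x, f (z, x) ∂μr := by
      apply MeasureTheory.integral_congr_ae
      filter_upwards [ae_restrict_mem measurableSet_Ioo] with x hx
      have h2 : 0 ≤ f (z, x) := by
        have hzx : z * x < 1 := by nlinarith [hx.1, hx.2]
        have : (0:ℝ) ≤ (1 - z * x) ^ e := zpow_nonneg (by linarith) e
        have : (0:ℝ) ≤ (1 - z) ^ n := pow_nonneg (by linarith) n
        simp only [hf]
        positivity
      exact norm_of_nonneg h2
    rw [h1]
    have h3 : (∫ x, f (z, x) ∂μr)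
        = ((1 - z) ^ n * z) * ∫ x in Set.Ioo (0:ℝ) 1, (1 - z * x) ^ e := by
      rw [hμr, ← MeasureTheory.integral_const_mul]
    rw [h3, zpow17_inner_eq e ⟨hz0, hz1⟩, ← hHeq z ⟨hz0, hz1⟩]
    field_simp
  have hint : Integrable f (μr.prod μr) := by
    rw [integrable_prod_iff hfm.aestronglyMeasurable]
    constructor
    · filter_upwards [ae_restrict_mem measurableSet_Ioo] with z hz using hpt z hz
    · apply hHint.congr
      filter_upwards [ae_restrict_mem measurableSet_Ioo] with z hz
      exact (hnorm z hz).symm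
  constructor
  · rw [IntegrableOn, hprod]; exact hint
  · rw [show (∫ p in Set.Ioo (0:ℝ) 1 ×ˢ Set.Ioo (0:ℝ) 1,
        (1 - p.1) ^ n * p.1 * (1 - p.1 * p.2) ^ e) = ∫ p, f p ∂μr.prod μr by
        rw [← hprod] ]
    rw [integral_prod f hint, ← hHval]
    apply MeasureTheory.integral_congr_ae
    filter_upwards [ae_restrict_mem measurableSet_Ioo] with z hz
    have h1 : (∫ x, f (z, x) ∂μr)
        = ((1 - z) ^ n * z) * ∫ x in Set.Ioo (0:ℝ) 1, (1 - z * x) ^ e := by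
      rw [hμr, ← MeasureTheory.integral_const_mul]
    rw [h1, zpow17_inner_eq e hz, ← hHeq z hz]
    have hz0 := hz.1
    field_simp

lemma zpow17_caseA (n k : ℕ) (e : ℤ) (he : e ≠ -1) (hk : (k:ℤ) = e + n + 1) :
    IntegrableOn (fun p : ℝ × ℝ => (1 - p.1) ^ n * p.1 * (1 - p.1 * p.2) ^ e)
      (Set.Ioo 0 1 ×ˢ Set.Ioo 0 1) ∧
    ∫ p in Set.Ioo (0:ℝ) 1 ×ˢ Set.Ioo (0:ℝ) 1,
        (1 - p.1) ^ n * p.1 * (1 - p.1 * p.2) ^ e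
      = 1 / (((n:ℝ) + 1) * ((k:ℝ) + 1)) := by
  have he1 : ((e:ℝ) + 1) ≠ 0 := by
    have h : (e:ℤ) + 1 ≠ 0 := by omega
    exact_mod_cast h
  apply zpow17_main n k e (fun z => ((1 - z) ^ n - (1 - z) ^ k) / ((e:ℝ) + 1))
  · have hc : Continuous (fun z : ℝ => ((1 - z) ^ n - (1 - z) ^ k) / ((e:ℝ) + 1)) := by
      fun_prop
    exact (hc.continuousOn.integrableOn_Icc).mono_set Set.Ioo_subset_Icc_self
  · intro z hz
    obtain ⟨hz0, hz1⟩ := hz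
    have hb : (0:ℝ) < 1 - z := by linarith
    have h0 : (0:ℝ) ∉ [[1 - z, 1]] := by
      rw [Set.uIcc_of_le (by linarith)]
      intro h
      exact absurd h.1 (by linarith)
    rw [integral_zpow (Or.inr ⟨he, h0⟩)]
    have key : (1 - z) ^ n * (1 - z) ^ (e + 1) = (1 - z) ^ k := by
      rw [← zpow_natCast (1 - z) n, ← zpow_add₀ hb.ne', ← zpow_natCast (1 - z) k]
      congr 1
      omega
    rw [one_zpow]
    field_simp
    linear_combination -key
  · rw [← integral_Ioc_eq_integral_Ioo, ← intervalIntegral.integral_of_le zero_le_one]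
    rw [intervalIntegral.integral_div]
    rw [intervalIntegral.integral_sub
      ((by fun_prop : Continuous fun x : ℝ => (1 - x) ^ n).intervalIntegrable 0 1)
      ((by fun_prop : Continuous fun x : ℝ => (1 - x) ^ k).intervalIntegrable 0 1)]
    have h1 := zpow17_pow_int n
    have h2 := zpow17_pow_int k
    rw [h1, h2]
    have hecast : (e:ℝ) = (k:ℝ) - (n:ℝ) - 1 := by
      have : (e:ℤ) = (k:ℤ) - (n:ℤ) - 1 := by omega
      exact_mod_cast this
    have hn1 : ((n:ℝ) + 1) ≠ 0 := by positivity
    have hk1 : ((k:ℝ) + 1) ≠ 0 := by positivity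
    have hkn : (k:ℝ) - (n:ℝ) ≠ 0 := by
      have : (k:ℤ) - (n:ℤ) ≠ 0 := by omega
      intro h
      apply this
      exact_mod_cast h
    rw [hecast]
    field_simp
    ring_nf
    rw [← sub_mul, mul_inv_cancel₀ hkn]

lemma zpow17_caseB (n : ℕ) :
    IntegrableOn (fun p : ℝ × ℝ => (1 - p.1) ^ n * p.1 * (1 - p.1 * p.2) ^ (-1 : ℤ))
      (Set.Ioo 0 1 ×ˢ Set.Ioo 0 1) ∧
    ∫ p in Set.Ioo (0:ℝ) 1 ×ˢ Set.Ioo (0:ℝ) 1,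
        (1 - p.1) ^ n * p.1 * (1 - p.1 * p.2) ^ (-1 : ℤ)
      = 1 / (((n:ℝ) + 1) * ((n:ℝ) + 1)) := by
  apply zpow17_main n n (-1) (fun z => (1 - z) ^ n * -Real.log (1 - z))
  · have h := ((aux_ii_log n).comp_sub_left 1).neg
    norm_num at h
    have heqf : (fun z : ℝ => (1 - z) ^ n * -Real.log (1 - z))
        = (-fun x : ℝ => (1 - x) ^ n * Real.log (1 - x)) := by
      funext x; simp only [Pi.neg_apply]; ring
    have h2 : IntervalIntegrable (fun z : ℝ => (1 - z) ^ n * -Real.log (1 - z))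
        volume 0 1 := by
      rw [heqf]; exact h.symm
    rw [intervalIntegrable_iff_integrableOn_Ioc_of_le zero_le_one] at h2
    exact h2.mono_set Set.Ioo_subset_Ioc_self
  · intro z hz
    obtain ⟨hz0, hz1⟩ := hz
    have hb : (0:ℝ) < 1 - z := by linarith
    have h0 : (0:ℝ) ∉ [[1 - z, 1]] := by
      rw [Set.uIcc_of_le (by linarith)]
      intro h
      exact absurd h.1 (by linarith)
    have : ∫ t in (1 - z)..1, (t:ℝ) ^ (-1 : ℤ) = ∫ t in (1 - z)..1, t⁻¹ := by
      congr 1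
      funext t
      exact zpow_neg_one t
    rw [this, integral_inv h0, one_div, Real.log_inv]
  · rw [← integral_Ioc_eq_integral_Ioo, ← intervalIntegral.integral_of_le zero_le_one]
    have h := intervalIntegral.integral_comp_sub_left (a := (0:ℝ)) (b := 1)
      (fun u : ℝ => u ^ n * -Real.log u) 1
    simp only [sub_self, sub_zero] at h
    rw [show (fun z : ℝ => (1 - z) ^ n * -Real.log (1 - z))
        = fun z : ℝ => (fun u : ℝ => u ^ n * -Real.log u) (1 - z) from rfl] at *
    rw [h]
    simp only [mul_neg]
    rw [intervalIntegral.integral_neg, aux_int_log n, neg_neg]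
    rw [one_div, one_div]
    congr 1
    ring

/-- The analytic core of the zeta-integral evaluation in case (C2, III):
for `ν ≥ 1`, `μ, β ≥ 0`,
`∫₀¹∫₀¹ (1−z)^{ν−1} z (1−zx)^{β+μ−ν} dx dz = 1/(ν(β+μ+1))` (with convergence). -/
theorem stmt_17 (ν μ β : ℕ) (hν : 1 ≤ ν) :
    IntegrableOn (fun p : ℝ × ℝ =>
        (1 - p.1) ^ (ν - 1) * p.1 * (1 - p.1 * p.2) ^ ((β : ℤ) + (μ : ℤ) - (ν : ℤ)))
      (Set.Ioo 0 1 ×ˢ Set.Ioo 0 1) ∧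
    ∫ p in Set.Ioo (0 : ℝ) 1 ×ˢ Set.Ioo (0 : ℝ) 1,
        (1 - p.1) ^ (ν - 1) * p.1 * (1 - p.1 * p.2) ^ ((β : ℤ) + (μ : ℤ) - (ν : ℤ))
      = 1 / ((ν : ℝ) * ((β : ℝ) + (μ : ℝ) + 1)) := by
  have hcast : ((ν - 1 : ℕ) : ℝ) + 1 = (ν : ℝ) := by
    have h : (ν - 1) + 1 = ν := by omega
    exact_mod_cast h
  by_cases hem : (β : ℤ) + (μ : ℤ) - (ν : ℤ) = -1
  · have h := zpow17_caseB (ν - 1)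
    rw [hem]
    refine ⟨h.1, ?_⟩
    rw [h.2, hcast]
    have hbm : (β : ℝ) + (μ : ℝ) + 1 = (ν : ℝ) := by
      have h2 : (β : ℤ) + (μ : ℤ) + 1 = (ν : ℤ) := by omega
      exact_mod_cast h2
    rw [hbm]
  · have h := zpow17_caseA (ν - 1) (β + μ) ((β : ℤ) + (μ : ℤ) - (ν : ℤ)) hem (by omega)
    refine ⟨h.1, ?_⟩
    rw [h.2, hcast]
    push_cast
    ring_nf
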